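/- In a finite graph G in which a vertex v dominates a vertex u (N[v] ⊇ N[u], u ≠ v), the cop wins G if and only if the cop wins G - u. -/

import Mathlib

/-- The closed neighbourhood `N[v]` of a vertex. -/
def closedNbhd {V : Type*} (G : SimpleGraph V) (v : V) : Set V :=
  insert v {u | G.Adj v u}

/-- `v` dominates `u`: `N[v] ⊇ N[u]`. -/
def Dominates {V : Type*} (G : SimpleGraph V) (v u : V) : Prop :=
  closedNbhd G u ⊆ closedNbhd G v

/-- `v` dominates `u` in the subgraph induced on `S`. -/
def DominatesOn {V : Type*} (G : SimpleGraph V) (S : Set V) (v u : V) : Prop :=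
  ∀ w ∈ S, w ∈ closedNbhd G u → w ∈ closedNbhd G v

/-- A (finite) graph is dismantlable: its vertices can be ordered `v_1, …, v_n` so that
for each `i < n` some later `v_j` dominates `v_i` in the subgraph induced on
`{v_i, …, v_n}`. -/
def Dismantlable {V : Type*} (G : SimpleGraph V) : Prop :=
  ∃ (n : ℕ) (e : Fin n ≃ V), ∀ i : Fin n, (i : ℕ) + 1 < n →
    ∃ j : Fin n, i < j ∧
      DominatesOn G {w | ∃ k : Fin n, i ≤ k ∧ e k = w} (e j) (e i)

/-- A full-information cop strategy: an initial vertex, and a move function taking the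
current cop and robber positions to a new cop position, which must be the current one or
an adjacent one. -/
structure CopStrategy {V : Type*} (G : SimpleGraph V) where
  init : V
  move : V → V → V
  valid : ∀ c r, move c r = c ∨ G.Adj c (move c r)

/-- A full-information robber strategy: an initial vertex chosen knowing the cop's start,
and a move function taking the cop's (just updated) position and the robber's position to
a new robber position, which must be the current one or an adjacent one. -/
structure RobberStrategy {V : Type*} (G : SimpleGraph V) where
  init : V → V
  move : V → V → V
  valid : ∀ c r, move c r = r ∨ G.Adj r (move c r)

/-- The pair of (cop, robber) positions after `k` full rounds of play: the cop moves
first in each round, then the robber responds. -/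
def play {V : Type*} (G : SimpleGraph V) (cs : CopStrategy G) (rs : RobberStrategy G) :
    ℕ → V × V
  | 0 => (cs.init, rs.init cs.init)
  | k + 1 =>
      let p := play G cs rs k
      let c' := cs.move p.1 p.2
      (c', rs.move c' p.2)

/-- The cop wins: there is a cop strategy such that against every robber strategy, at some
round the cop's move lands on the robber's current vertex. -/
def CopWin {V : Type*} (G : SimpleGraph V) : Prop :=
  ∃ cs : CopStrategy G, ∀ rs : RobberStrategy G,
    ∃ k : ℕ, (play G cs rs (k + 1)).1 = (play G cs rs k).2


namespace CWAux

lemma mem_closedNbhd {V : Type*} {G : SimpleGraph V} {x w : V} :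
    w ∈ closedNbhd G x ↔ w = x ∨ G.Adj x w := by
  simp [closedNbhd]

lemma self_mem_closedNbhd {V : Type*} (G : SimpleGraph V) (x : V) :
    x ∈ closedNbhd G x := mem_closedNbhd.2 (Or.inl rfl)

lemma closedNbhd_comm {V : Type*} {G : SimpleGraph V} {x w : V} :
    w ∈ closedNbhd G x ↔ x ∈ closedNbhd G w := by
  rw [mem_closedNbhd, mem_closedNbhd]
  constructor <;> rintro (h | h)
  · exact Or.inl h.symm
  · exact Or.inr h.symm
  · exact Or.inl h.symm
  · exact Or.inr h.symm

/-- The cop can guarantee capture within `n` moves from configuration `(c, r)`,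
cop to move. -/
def WinIn {W : Type*} (H : SimpleGraph W) : ℕ → W → W → Prop
  | 0, _, _ => False
  | n + 1, c, r => ∃ c', c' ∈ closedNbhd H c ∧
      (c' = r ∨ ∀ r' ∈ closedNbhd H r, WinIn H n c' r')

lemma winIn_mono {W : Type*} {H : SimpleGraph W} :
    ∀ {n : ℕ} {c r : W}, WinIn H n c r → WinIn H (n + 1) c r := by
  intro n
  induction n with
  | zero => intro c r h; exact h.elim
  | succ n ih =>
    rintro c r ⟨c', hc', h⟩
    exact ⟨c', hc', h.imp id fun hall r' hr' => ih (hall r' hr')⟩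

lemma winIn_le {W : Type*} {H : SimpleGraph W} {m n : ℕ} (hmn : m ≤ n) {c r : W}
    (h : WinIn H m c r) : WinIn H n c r := by
  induction n, hmn using Nat.le_induction with
  | base => exact h
  | succ n _ ih => exact winIn_mono ih

lemma winIn_of_mem {W : Type*} {H : SimpleGraph W} {n : ℕ} {c r : W}
    (h : r ∈ closedNbhd H c) : WinIn H (n + 1) c r :=
  ⟨r, h, Or.inl rfl⟩

lemma not_mem_of_esc {W : Type*} {H : SimpleGraph W} {c r : W}
    (h : ∀ n, ¬ WinIn H n c r) : r ∉ closedNbhd H c :=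
  fun hr => h 1 (winIn_of_mem hr)

section Game

variable {W : Type*} (H : SimpleGraph W)

open scoped Classical in
lemma move_spec {c r : W} (h : ∃ n, WinIn H n c r) :
    ∃ c', c' ∈ closedNbhd H c ∧
      (c' = r ∨ ∀ r' ∈ closedNbhd H r, WinIn H (Nat.find h - 1) c' r') := by
  have hs := Nat.find_spec h
  rcases hn : Nat.find h with _ | m
  · rw [hn] at hs; exact hs.elim
  · rw [hn] at hs
    obtain ⟨c', hc', hd⟩ := hs
    exact ⟨c', hc', by simpa using hd⟩

open Classical in
noncomputable def copMove (c r : W) : W :=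
  if h : ∃ n, WinIn H n c r then (move_spec H h).choose else c

lemma copWin_of_winIn (c₀ : W) (h : ∀ r₀, ∃ n, WinIn H n c₀ r₀) : CopWin H := by
  classical
  have hvalid : ∀ c r, copMove H c r = c ∨ H.Adj c (copMove H c r) := by
    intro c r
    unfold copMove
    split_ifs with hex
    · rcases mem_closedNbhd.1 (move_spec H hex).choose_spec.1 with h1 | h1
      · exact Or.inl h1
      · exact Or.inr h1
    · exact Or.inl rfl
  refine ⟨⟨c₀, copMove H, hvalid⟩, fun rs => ?_⟩
  set cs : CopStrategy H := ⟨c₀, copMove H, hvalid⟩ with hcs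
  have key : ∀ m k, WinIn H m (play H cs rs k).1 (play H cs rs k).2 →
      ∃ j, (play H cs rs (j + 1)).1 = (play H cs rs j).2 := by
    intro m
    induction m using Nat.strong_induction_on with
    | _ m ih =>
      intro k hm
      have hex : ∃ n, WinIn H n (play H cs rs k).1 (play H cs rs k).2 := ⟨m, hm⟩
      have hmove : (play H cs rs (k + 1)).1 = (move_spec H hex).choose := by
        show cs.move _ _ = _
        show copMove H _ _ = _
        unfold copMove
        rw [dif_pos hex]
      obtain ⟨hc', hd⟩ := (move_spec H hex).choose_spec
      rcases hd with hcap | hall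
      · exact ⟨k, by rw [hmove, hcap]⟩
      · have hr' : (play H cs rs (k + 1)).2 ∈ closedNbhd H (play H cs rs k).2 := by
          have := rs.valid (play H cs rs (k + 1)).1 (play H cs rs k).2
          rcases this with h1 | h1
          · exact mem_closedNbhd.2 (Or.inl h1)
          · exact mem_closedNbhd.2 (Or.inr h1)
        have hw : WinIn H (Nat.find hex - 1) (play H cs rs (k + 1)).1
            (play H cs rs (k + 1)).2 := by
          rw [hmove]; exact hall _ hr'
        have hfind1 : 1 ≤ Nat.find hex := by
          rcases Nat.eq_zero_or_pos (Nat.find hex) with h0 | h0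
          · exact absurd (h0 ▸ Nat.find_spec hex) (fun hh => hh.elim)
          · exact h0
        have : Nat.find hex - 1 < m :=
          lt_of_lt_of_le (Nat.sub_lt hfind1 one_pos) (Nat.find_le hm)
        exact ih _ this (k + 1) hw
  obtain ⟨n, hn⟩ := h (rs.init c₀)
  exact key n 0 hn

lemma winIn_of_copWin [Finite W] (h : CopWin H) :
    ∃ c₀, ∀ r₀, ∃ n, WinIn H n c₀ r₀ := by
  classical
  obtain ⟨cs, hcs⟩ := h
  refine ⟨cs.init, fun r₀ => ?_⟩
  by_contra hno
  push_neg at hno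
  have hstep : ∀ c r, (∀ n, ¬ WinIn H n c r) → ∀ c' ∈ closedNbhd H c,
      ∃ r', r' ∈ closedNbhd H r ∧ ∀ n, ¬ WinIn H n c' r' := by
    intro c r hesc c' hc'
    by_contra hcon
    push_neg at hcon
    have hall : ∀ r' : W, ∃ n, r' ∈ closedNbhd H r → WinIn H n c' r' := by
      intro r'
      by_cases hr : r' ∈ closedNbhd H r
      · obtain ⟨n, hn⟩ := hcon r' hr
        exact ⟨n, fun _ => hn⟩
      · exact ⟨0, fun hh => absurd hh hr⟩
    choose g hg using hall
    haveI := Fintype.ofFinite W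
    have : WinIn H (Finset.univ.sup g + 1) c r :=
      ⟨c', hc', Or.inr fun r' hr' =>
        winIn_le (Finset.le_sup (Finset.mem_univ r')) (hg r' hr')⟩
    exact hesc _ this
  set rs : RobberStrategy H :=
    ⟨fun c => if h : ∃ r, ∀ n, ¬ WinIn H n c r then h.choose else c,
     fun c' r => if h : ∃ r', r' ∈ closedNbhd H r ∧ ∀ n, ¬ WinIn H n c' r'
       then h.choose else r,
     by
       intro c r
       split_ifs with h
       · rcases mem_closedNbhd.1 h.choose_spec.1 with h1 | h1
         · exact Or.inl h1
         · exact Or.inr h1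
       · exact Or.inl rfl⟩ with hrs
  have hinv : ∀ k, ∀ n, ¬ WinIn H n (play H cs rs k).1 (play H cs rs k).2 := by
    intro k
    induction k with
    | zero =>
      have hex : ∃ r, ∀ n, ¬ WinIn H n cs.init r := ⟨r₀, hno⟩
      have : (play H cs rs 0).2 = hex.choose := by
        show rs.init cs.init = _
        show (if h : ∃ r, ∀ n, ¬ WinIn H n cs.init r then h.choose else cs.init) = _
        rw [dif_pos hex]
      rw [this]
      exact hex.choose_spec
    | succ k ih =>
      have hc' : (play H cs rs (k + 1)).1 ∈ closedNbhd H (play H cs rs k).1 := by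
        rcases cs.valid (play H cs rs k).1 (play H cs rs k).2 with h1 | h1
        · exact mem_closedNbhd.2 (Or.inl h1)
        · exact mem_closedNbhd.2 (Or.inr h1)
      have hex : ∃ r', r' ∈ closedNbhd H (play H cs rs k).2 ∧
          ∀ n, ¬ WinIn H n (play H cs rs (k + 1)).1 r' :=
        hstep _ _ ih _ hc'
      have : (play H cs rs (k + 1)).2 = hex.choose := by
        show rs.move (play H cs rs (k + 1)).1 (play H cs rs k).2 = _
        show (if h : ∃ r', r' ∈ closedNbhd H (play H cs rs k).2 ∧
            ∀ n, ¬ WinIn H n (play H cs rs (k + 1)).1 r' then h.choose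
            else (play H cs rs k).2) = _
        rw [dif_pos hex]
      rw [this]
      exact hex.choose_spec.2
  obtain ⟨k, hk⟩ := hcs rs
  have hc' : (play H cs rs (k + 1)).1 ∈ closedNbhd H (play H cs rs k).1 := by
    rcases cs.valid (play H cs rs k).1 (play H cs rs k).2 with h1 | h1
    · exact mem_closedNbhd.2 (Or.inl h1)
    · exact mem_closedNbhd.2 (Or.inr h1)
  rw [hk] at hc'
  exact not_mem_of_esc (hinv k) ((closedNbhd_comm).1 hc' |> (closedNbhd_comm).2)

end Game


section Retract

variable {V : Type*} {G : SimpleGraph V} {u v : V}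

lemma mem_closedNbhd_induce {S : Set V} {a b : S} :
    b ∈ closedNbhd (G.induce S) a ↔ (b : V) ∈ closedNbhd G (a : V) := by
  simp [mem_closedNbhd, Subtype.ext_iff]

open Classical in
/-- The retraction sending `u` to `v` and fixing everything else. -/
noncomputable def retr (huv : u ≠ v) : V → {w : V | w ≠ u} :=
  fun w => if h : w = u then ⟨v, Ne.symm huv⟩ else ⟨w, h⟩

lemma retr_of_ne (huv : u ≠ v) {w : V} (h : w ≠ u) : retr huv w = ⟨w, h⟩ :=
  dif_neg h

lemma retr_u (huv : u ≠ v) : retr huv u = ⟨v, Ne.symm huv⟩ :=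
  dif_pos rfl

lemma retr_hom (huv : u ≠ v) (hdom : Dominates G v u) {a b : V}
    (hb : b ∈ closedNbhd G a) :
    retr huv b ∈ closedNbhd (G.induce {w : V | w ≠ u}) (retr huv a) := by
  rw [mem_closedNbhd_induce]
  by_cases ha : a = u <;> by_cases hbu : b = u
  · subst ha; subst hbu
    rw [retr_u]
    exact self_mem_closedNbhd G v
  · subst ha
    rw [retr_u, retr_of_ne huv hbu]
    exact hdom hb
  · subst hbu
    rw [retr_u, retr_of_ne huv ha]
    exact closedNbhd_comm.1 (hdom (closedNbhd_comm.1 hb))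
  · rw [retr_of_ne huv ha, retr_of_ne huv hbu]
    exact hb

/-- If the cop can win against the robber at `v`, he can win against the robber at `u`
(one move slower), since `N[u] ⊆ N[v]`. -/
lemma winIn_u_of_winIn_v (hdom : Dominates G v u) {n : ℕ} {c : V}
    (h : WinIn G n c v) : WinIn G (n + 1) c u := by
  cases n with
  | zero => exact h.elim
  | succ n =>
    obtain ⟨c', hc', hd⟩ := h
    refine ⟨c', hc', Or.inr fun r' hr' => ?_⟩
    have hrv : r' ∈ closedNbhd G v := hdom hr'
    rcases hd with hcap | hall
    · subst hcap; exact winIn_of_mem hrv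
    · exact winIn_mono (hall r' hrv)

/-- Winning positions lift from `G - u` to `G` (with a factor-2 slowdown to absorb
robber excursions to `u`). -/
lemma winIn_lift (huv : u ≠ v) (hdom : Dominates G v u) :
    ∀ (n : ℕ) (c r : {w : V | w ≠ u}),
      WinIn (G.induce {w : V | w ≠ u}) n c r → WinIn G (2 * n) (c : V) (r : V) := by
  intro n
  induction n with
  | zero => intro c r h; exact h.elim
  | succ n ih =>
    rintro c r ⟨c', hc', hd⟩
    rw [Nat.mul_succ]
    refine ⟨(c' : V), mem_closedNbhd_induce.1 hc', ?_⟩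
    rcases hd with hcap | hall
    · exact Or.inl (congrArg _ hcap)
    · refine Or.inr fun r' hr' => ?_
      by_cases hru : r' = u
      · rw [hru] at hr' ⊢
        have hv : (⟨v, Ne.symm huv⟩ : {w : V | w ≠ u}) ∈
            closedNbhd (G.induce {w : V | w ≠ u}) r := by
          rw [mem_closedNbhd_induce]
          exact closedNbhd_comm.1 (hdom (closedNbhd_comm.1 hr'))
        have h1 : WinIn G (2 * n) (c' : V) v := ih c' ⟨v, Ne.symm huv⟩ (hall _ hv)
        exact winIn_u_of_winIn_v hdom h1
      · have hmem : (⟨r', hru⟩ : {w : V | w ≠ u}) ∈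
            closedNbhd (G.induce {w : V | w ≠ u}) r := by
          rw [mem_closedNbhd_induce]; exact hr'
        exact winIn_mono (ih c' _ (hall _ hmem))

/-- Winning positions project from `G` to `G - u` along the retraction. -/
lemma winIn_proj (huv : u ≠ v) (hdom : Dominates G v u) :
    ∀ (n : ℕ) (c r : V) (hr : r ≠ u),
      WinIn G n c r → WinIn (G.induce {w : V | w ≠ u}) n (retr huv c) ⟨r, hr⟩ := by
  intro n
  induction n with
  | zero => intro c r hr h; exact h.elim
  | succ n ih =>
    rintro c r hr ⟨c', hc', hd⟩
    refine ⟨retr huv c', retr_hom huv hdom hc', ?_⟩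
    rcases hd with hcap | hall
    · subst hcap
      exact Or.inl (retr_of_ne huv hr)
    · refine Or.inr fun r'' hr'' => ?_
      have hmem : (r'' : V) ∈ closedNbhd G r := mem_closedNbhd_induce.1 hr''
      have := ih c' (r'' : V) r''.2 (hall _ hmem)
      rwa [Subtype.coe_eta] at this

end Retract

end CWAux

/-- if `v` dominates `u` in a finite graph `G`, then the cop wins `G` iff
the cop wins `G - u`. -/
theorem copWin_iff_copWin_remove_dominated {V : Type*} [Finite V] (G : SimpleGraph V)
    (u v : V) (huv : u ≠ v) (hdom : Dominates G v u) :
    CopWin G ↔ CopWin (G.induce {w | w ≠ u}) := by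
  classical
  constructor
  · intro h
    obtain ⟨c₀, hc⟩ := CWAux.winIn_of_copWin G h
    apply CWAux.copWin_of_winIn _ (CWAux.retr huv c₀)
    intro r₀
    obtain ⟨n, hn⟩ := hc (r₀ : V)
    refine ⟨n, ?_⟩
    have := CWAux.winIn_proj huv hdom n c₀ (r₀ : V) r₀.2 hn
    rwa [Subtype.coe_eta] at this
  · intro h
    obtain ⟨c₀, hc⟩ := CWAux.winIn_of_copWin _ h
    apply CWAux.copWin_of_winIn _ (c₀ : V)
    intro r₀
    by_cases hr : r₀ = u
    · obtain ⟨n, hn⟩ := hc ⟨v, Ne.symm huv⟩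
      have h1 := CWAux.winIn_lift huv hdom n c₀ ⟨v, Ne.symm huv⟩ hn
      exact ⟨2 * n + 1, hr ▸ CWAux.winIn_u_of_winIn_v hdom h1⟩
    · obtain ⟨n, hn⟩ := hc ⟨r₀, hr⟩
      exact ⟨2 * n, CWAux.winIn_lift huv hdom n c₀ ⟨r₀, hr⟩ hn⟩
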